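/- (Theorem 3, D1: invariance of the calibrated score.) Let T: 𝒳 → 𝒳' be a measurable bijection with measurable inverse, G = T#F, and suppose the preference equivariance p_G(Tx, Ty) = p_F(x, y) holds for all x, y. Let Θ₀(F) ⊂ L²(F) be a nonempty convex compact set of mean-zero functions, and set Θ₀(G) = {θ ∘ T^{−1} : θ ∈ Θ₀(F)}. If θ*_F is the unique minimizer of L_F over Θ₀(F) and θ*_G is the unique minimizer of L_G over Θ₀(G), then θ*_G ∘ T = θ*_F in L²(F); in particular the strength scores satisfy exp{θ*_G(Tx)} = exp{θ*_F(x)} for F-almost every x. -/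

import Mathlib

open MeasureTheory

/-- The logistic function `σ(t) = 1/(1+e^{-t})`. -/
noncomputable def logistic (t : ℝ) : ℝ := 1 / (1 + Real.exp (-t))

/-- The pointwise cross-entropy loss `ℓ_p(t) = -p log σ(t) - (1-p) log σ(-t)`. -/
noncomputable def ceLoss (p t : ℝ) : ℝ :=
  -p * Real.log (logistic t) - (1 - p) * Real.log (logistic (-t))

/-- The preference probability `p_F(x,y) = P_{Z∼F}{δ(Z,x) > δ(Z,y)}`. -/
noncomputable def prefProb {X : Type*} [MeasurableSpace X] (F : Measure X)
    (δ : X → X → ℝ) (x y : X) : ℝ :=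
  (F {z | δ z y < δ z x}).toReal

/-- The population cross-entropy risk
`L_F(θ) = E_{X,Y i.i.d. ∼ F} [ℓ_{p_F(X,Y)}(θ(Y) - θ(X))]`. -/
noncomputable def popRisk {X : Type*} [MeasurableSpace X] (F : Measure X)
    (δ : X → X → ℝ) (θ : X → ℝ) : ℝ :=
  ∫ q, ceLoss (prefProb F δ q.1 q.2) (θ q.2 - θ q.1) ∂(F.prod F)


/-- The preference centrality `r_F(y) = E_{X∼F}[p_F(X,y)]`. -/
noncomputable def prefCentrality {X : Type*} [MeasurableSpace X] (F : Measure X)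
    (δ : X → X → ℝ) (y : X) : ℝ :=
  ∫ x, prefProb F δ x y ∂F

lemma logistic_pos (t : ℝ) : 0 < logistic t := by
  unfold logistic
  positivity

lemma continuous_logistic : Continuous logistic := by
  apply Continuous.div continuous_const
  · exact continuous_const.add (Real.continuous_exp.comp continuous_neg)
  · intro t
    positivity

lemma continuous_log_logistic : Continuous fun t => Real.log (logistic t) :=
  Real.continuousOn_log.comp_continuous continuous_logistic
    (fun t => (logistic_pos t).ne')

lemma continuous_ceLoss : Continuous fun p : ℝ × ℝ => ceLoss p.1 p.2 := by
  unfold ceLoss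
  apply Continuous.sub
  · exact (continuous_fst.neg).mul (continuous_log_logistic.comp continuous_snd)
  · exact (continuous_const.sub continuous_fst).mul
      (continuous_log_logistic.comp (continuous_neg.comp continuous_snd))

lemma measurable_prefProb {X : Type*} [MeasurableSpace X] (G : Measure X) [SFinite G]
    (δ : X → X → ℝ) (hδ : Measurable fun q : X × X => δ q.1 q.2) :
    Measurable fun q : X × X => prefProb G δ q.1 q.2 := by
  have hs : MeasurableSet {p : (X × X) × X | δ p.2 p.1.2 < δ p.2 p.1.1} := by
    apply measurableSet_lt
    · exact hδ.comp (measurable_snd.prodMk (measurable_fst.snd))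
    · exact hδ.comp (measurable_snd.prodMk (measurable_fst.fst))
  exact (measurable_measure_prodMk_left (ν := G) hs).ennreal_toReal

lemma aesm_risk_integrand {X : Type*} [MeasurableSpace X] (G : Measure X) [SFinite G]
    (δ : X → X → ℝ) (hδ : Measurable fun q : X × X => δ q.1 q.2)
    (η : X → ℝ) (hη : AEStronglyMeasurable η G) :
    AEStronglyMeasurable
      (fun q : X × X => ceLoss (prefProb G δ q.1 q.2) (η q.2 - η q.1)) (G.prod G) := by
  have h1 : AEStronglyMeasurable (fun q : X × X => η q.1) (G.prod G) :=
    hη.comp_quasiMeasurePreserving Measure.quasiMeasurePreserving_fst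
  have h2 : AEStronglyMeasurable (fun q : X × X => η q.2) (G.prod G) :=
    hη.comp_quasiMeasurePreserving Measure.quasiMeasurePreserving_snd
  have hp : AEStronglyMeasurable (fun q : X × X => prefProb G δ q.1 q.2) (G.prod G) :=
    (measurable_prefProb G δ hδ).aestronglyMeasurable
  exact continuous_ceLoss.comp_aestronglyMeasurable (hp.prodMk (h2.sub h1))

lemma popRisk_map {X X' : Type*} [MeasurableSpace X] [MeasurableSpace X']
    (F : Measure X) [IsProbabilityMeasure F]
    (δ : X → X → ℝ) (δ' : X' → X' → ℝ) (hδ' : Measurable fun q : X' × X' => δ' q.1 q.2)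
    (T : X → X') (hT : Measurable T)
    (hequiv : ∀ x y : X, prefProb (F.map T) δ' (T x) (T y) = prefProb F δ x y)
    (η : X' → ℝ) (hη : AEStronglyMeasurable η (F.map T))
    (θ : X → ℝ) (h : (fun x => η (T x)) =ᵐ[F] θ) :
    popRisk (F.map T) δ' η = popRisk F δ θ := by
  haveI : IsProbabilityMeasure (F.map T) := Measure.isProbabilityMeasure_map hT.aemeasurable
  have hprod : (F.map T).prod (F.map T) = (F.prod F).map (Prod.map T T) :=
    Measure.map_prod_map F F hT hT
  have hTT : Measurable (Prod.map T T) := hT.prodMap hT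
  have haesm := aesm_risk_integrand (F.map T) δ' hδ' η hη
  unfold popRisk
  rw [hprod] at haesm ⊢
  rw [integral_map hTT.aemeasurable haesm]
  have h1 : ∀ᵐ q ∂(F.prod F), η (T q.1) = θ q.1 :=
    Measure.quasiMeasurePreserving_fst.ae h
  have h2 : ∀ᵐ q ∂(F.prod F), η (T q.2) = θ q.2 :=
    Measure.quasiMeasurePreserving_snd.ae h
  apply integral_congr_ae
  filter_upwards [h1, h2] with q hq1 hq2
  show ceLoss (prefProb (F.map T) δ' (T q.1) (T q.2)) (η (T q.2) - η (T q.1)) = _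
  rw [hq1, hq2, hequiv q.1 q.2]

/-- Theorem 3, D1: invariance of the calibrated score. Under a
measurable bijection `T` with `G = T#F` and preference equivariance
`p_G(Tx,Ty) = p_F(x,y)`, if `Θ₀(G) = {θ ∘ T⁻¹ : θ ∈ Θ₀(F)}` and `θ*_F`, `θ*_G`
are the unique minimizers of `L_F` over `Θ₀(F)` and of `L_G` over `Θ₀(G)`,
then `θ*_G ∘ T = θ*_F` in `L²(F)`; in particular the strength scores satisfy
`exp{θ*_G(Tx)} = exp{θ*_F(x)}` for `F`-almost every `x`. -/
theorem calibrated_score_invariance {X X' : Type*} [MeasurableSpace X] [MeasurableSpace X']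
    (F : Measure X) [IsProbabilityMeasure F]
    (δ : X → X → ℝ) (hδ : Measurable fun q : X × X => δ q.1 q.2)
    (δ' : X' → X' → ℝ) (hδ' : Measurable fun q : X' × X' => δ' q.1 q.2)
    (T : X → X') (S : X' → X) (hT : Measurable T) (hS : Measurable S)
    (hST : Function.LeftInverse S T) (hTS : Function.RightInverse S T)
    (hequiv : ∀ x y : X, prefProb (F.map T) δ' (T x) (T y) = prefProb F δ x y)
    (Θ₀F : Set (Lp ℝ 2 F)) (hne : Θ₀F.Nonempty) (hconv : Convex ℝ Θ₀F)
    (hcomp : IsCompact Θ₀F) (hmean : ∀ θ ∈ Θ₀F, (∫ x, θ x ∂F) = 0)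
    (Θ₀G : Set (Lp ℝ 2 (F.map T)))
    (hΘG : ∀ η : Lp ℝ 2 (F.map T), η ∈ Θ₀G ↔ ∃ θ ∈ Θ₀F, (fun x => η (T x)) =ᵐ[F] ⇑θ)
    (θF : Lp ℝ 2 F) (hFmem : θF ∈ Θ₀F)
    (hFmin : ∀ θ ∈ Θ₀F, popRisk F δ ⇑θF ≤ popRisk F δ ⇑θ)
    (hFuniq : ∀ θ ∈ Θ₀F, (∀ θ' ∈ Θ₀F, popRisk F δ ⇑θ ≤ popRisk F δ ⇑θ') → θ = θF)
    (θG : Lp ℝ 2 (F.map T)) (hGmem : θG ∈ Θ₀G)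
    (hGmin : ∀ η ∈ Θ₀G, popRisk (F.map T) δ' ⇑θG ≤ popRisk (F.map T) δ' ⇑η)
    (hGuniq : ∀ η ∈ Θ₀G,
      (∀ η' ∈ Θ₀G, popRisk (F.map T) δ' ⇑η ≤ popRisk (F.map T) δ' ⇑η') → η = θG) :
    (fun x => θG (T x)) =ᵐ[F] ⇑θF ∧
    ∀ᵐ x ∂F, Real.exp (θG (T x)) = Real.exp (θF x) := by
  haveI : IsProbabilityMeasure (F.map T) := Measure.isProbabilityMeasure_map hT.aemeasurable
  -- S is measure preserving from F.map T to F
  have hMP : MeasurePreserving S (F.map T) F := by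
    refine ⟨hS, ?_⟩
    rw [Measure.map_map hS hT]
    have : S ∘ T = id := funext fun x => hST x
    rw [this, Measure.map_id]
  -- θG corresponds to some θ ∈ Θ₀F
  obtain ⟨θ, hθmem, hθeq⟩ := (hΘG θG).mp hGmem
  -- θ is a minimizer of popRisk F δ over Θ₀F
  have hRG : popRisk (F.map T) δ' ⇑θG = popRisk F δ ⇑θ :=
    popRisk_map F δ δ' hδ' T hT hequiv _ (Lp.aestronglyMeasurable θG) _ hθeq
  have hmin : ∀ θ' ∈ Θ₀F, popRisk F δ ⇑θ ≤ popRisk F δ ⇑θ' := by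
    intro θ' hθ'
    -- construct η' = θ' ∘ S in Lp of F.map T
    have hmem2 : MemLp (⇑θ') 2 F := Lp.memLp θ'
    have hmemS : MemLp (fun y => θ' (S y)) 2 (F.map T) := hmem2.comp_measurePreserving hMP
    set η' : Lp ℝ 2 (F.map T) := hmemS.toLp _ with hη'
    have hcoe : ⇑η' =ᵐ[F.map T] fun y => θ' (S y) := hmemS.coeFn_toLp
    have hcoeT : (fun x => η' (T x)) =ᵐ[F] ⇑θ' := by
      have hqmp : Measure.QuasiMeasurePreserving T F (F.map T) :=
        hT.quasiMeasurePreserving F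
      have := hqmp.ae hcoe
      filter_upwards [this] with x hx
      rw [hx, hST x]
    have hη'mem : η' ∈ Θ₀G := (hΘG η').mpr ⟨θ', hθ', hcoeT⟩
    have hR' : popRisk (F.map T) δ' ⇑η' = popRisk F δ ⇑θ' :=
      popRisk_map F δ δ' hδ' T hT hequiv _ (Lp.aestronglyMeasurable η') _ hcoeT
    calc popRisk F δ ⇑θ = popRisk (F.map T) δ' ⇑θG := hRG.symm
      _ ≤ popRisk (F.map T) δ' ⇑η' := hGmin η' hη'mem
      _ = popRisk F δ ⇑θ' := hR'
  have hθF : θ = θF := hFuniq θ hθmem hmin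
  have hmain : (fun x => θG (T x)) =ᵐ[F] ⇑θF := by
    rw [← hθF]; exact hθeq
  exact ⟨hmain, by filter_upwards [hmain] with x hx; rw [hx]⟩
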